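/- Let K be a number field that is Galois over ℚ with cyclic Galois group generated by σ, with ring of integers 𝓞. Suppose β ∈ K has N_{K/ℚ}(β) = 1 and α ∈ 𝓞 is a visible point for β. Then for any nonzero γ ∈ 𝓞, one has γ/σ(γ) = β if and only if there exists a nonzero rational integer n such that γ = n·α. -/

import Mathlib

open NumberField

/-- A nonzero algebraic integer `α` is a *visible point* for `β` (of norm `1`) if
`α / σ α = β` and `|N(α)|` is minimal among nonzero algebraic integers mapping to `β`. -/
def IsVisiblePoint (K : Type*) [Field K] [NumberField K]
    (σ : K ≃ₐ[ℚ] K) (β : K) (α : 𝓞 K) : Prop :=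
  α ≠ 0 ∧ (α : K) / σ (α : K) = β ∧
    ∀ γ : 𝓞 K, γ ≠ 0 → (γ : K) / σ (γ : K) = β →
      (Algebra.norm ℤ α).natAbs ≤ (Algebra.norm ℤ γ).natAbs

/-- If `α` is a visible point for `β` then a nonzero algebraic integer `γ`
satisfies `γ / σ γ = β` iff `γ = n • α` for some nonzero rational integer `n`. -/
theorem pi_eq_iff_int_multiple_of_visible
    (K : Type*) [Field K] [NumberField K] [IsGalois ℚ K]
    (σ : K ≃ₐ[ℚ] K) (hσ : ∀ τ : K ≃ₐ[ℚ] K, τ ∈ Subgroup.zpowers σ)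
    (β : K) (hβ : Algebra.norm ℚ β = 1)
    (α : 𝓞 K) (hα : IsVisiblePoint K σ β α)
    (γ : 𝓞 K) (hγ : γ ≠ 0) :
    (γ : K) / σ (γ : K) = β ↔ ∃ n : ℤ, n ≠ 0 ∧ γ = n • α := by
  obtain ⟨hα0, hαβ, hmin⟩ := hα
  have hβ0 : β ≠ 0 := by
    rintro rfl
    rw [Algebra.norm_zero] at hβ
    exact zero_ne_one hβ
  have hσα : σ (α : K) ≠ 0 := by
    intro h; rw [h, div_zero] at hαβ; exact hβ0 hαβ.symm
  have hαK : (α : K) ≠ 0 := by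
    intro h; rw [h, zero_div] at hαβ; exact hβ0 hαβ.symm
  have hγK : (γ : K) ≠ 0 := by simpa using hγ
  constructor
  · intro h
    have hσγ : σ (γ : K) ≠ 0 := by
      intro h'; rw [h', div_zero] at h; exact hβ0 h.symm
    set x : K := (γ : K) / (α : K) with hx
    have hcross : (γ : K) * σ (α : K) = (α : K) * σ (γ : K) := by
      have := h.trans hαβ.symm
      field_simp at this
      linear_combination this
    have hσx : σ x = x := by
      rw [hx, map_div₀, div_eq_div_iff hσα hαK]
      linear_combination -hcross
    have hfix : ∀ τ : K ≃ₐ[ℚ] K, τ x = x := fun τ =>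
      (Subgroup.zpowers_le.mpr (show σ ∈ MulAction.stabilizer (K ≃ₐ[ℚ] K) x from hσx)) (hσ τ)
    have hmem : x ∈ IntermediateField.fixedField (⊤ : Subgroup (K ≃ₐ[ℚ] K)) := fun g => hfix g
    have hle : IntermediateField.fixedField (⊤ : Subgroup (K ≃ₐ[ℚ] K)) ≤ ⊥ := by
      rw [← IsGalois.fixedField_fixingSubgroup (⊥ : IntermediateField ℚ K)]
      exact fun y hy g => hy ⟨g, Subgroup.mem_top _⟩
    obtain ⟨q, hq⟩ := (IntermediateField.mem_bot).mp (hle hmem)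
    have hγα : (γ : K) = algebraMap ℚ K q * (α : K) := by
      rw [hq, hx, div_mul_cancel₀ _ hαK]
    have hq0 : q ≠ 0 := by
      rintro rfl; simp at hγα; exact hγ hγα
    have hmapq : algebraMap ℚ K q = (q.num : K) / (q.den : K) := by
      rw [eq_ratCast (algebraMap ℚ K) q, Rat.cast_def]
    have hdK : (q.den : K) ≠ 0 := Nat.cast_ne_zero.mpr q.den_nz
    -- a • α = b • γ as algebraic integers
    have h1 : (q.num : 𝓞 K) * α = ((q.den : ℤ) : 𝓞 K) * γ := by
      have h1K : ((q.num : 𝓞 K) * α : K) = (((q.den : ℤ) : 𝓞 K) * γ : K) := by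
        push_cast
        rw [hγα, hmapq]
        field_simp
        exact map_intCast (algebraMap (𝓞 K) K) q.num
      exact_mod_cast h1K
    have hcop : IsCoprime q.num ((q.den : ℤ)) := by
      rw [Int.isCoprime_iff_gcd_eq_one]
      simpa [Int.gcd] using q.reduced
    obtain ⟨u, v, huv⟩ := hcop
    push_cast at h1
    set δ : 𝓞 K := u • γ + v • α with hδ
    have h2 : (u : 𝓞 K) * q.num + (v : 𝓞 K) * (q.den : ℕ) = 1 := by exact_mod_cast huv
    have hbδ : ((q.den : ℕ) : 𝓞 K) * δ = α := by
      rw [hδ]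
      push_cast [zsmul_eq_mul]
      linear_combination (-(u : 𝓞 K)) * h1 + α * h2
    have hδ0 : δ ≠ 0 := by
      intro h'; rw [h', mul_zero] at hbδ; exact hα0 hbδ.symm
    have hbδK : ((q.den : ℕ) : K) * (δ : K) = (α : K) := by
      have := congrArg (algebraMap (𝓞 K) K) hbδ
      rwa [map_mul, map_natCast] at this
    have hσδ0 : σ (δ : K) ≠ 0 := by
      intro h'
      have := congrArg σ hbδK
      rw [map_mul, h', mul_zero] at this
      exact hσα this.symm
    have hπδ : (δ : K) / σ (δ : K) = β := by
      rw [← hαβ, div_eq_div_iff hσδ0 hσα]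
      have hs : ((q.den : ℕ) : K) * σ (δ : K) = σ (α : K) := by
        have := congrArg σ hbδK
        rwa [map_mul, map_natCast] at this
      linear_combination (-(δ : K)) * hs + σ (δ : K) * hbδK
    have hle' := hmin δ hδ0 hπδ
    -- norm computation
    set d := Fintype.card (Module.Free.ChooseBasisIndex ℤ (𝓞 K)) with hdd
    have hnorm : Algebra.norm ℤ α = (q.den : ℤ) ^ d * Algebra.norm ℤ δ := by
      rw [← hbδ, map_mul]
      congr 1
      have : ((q.den : ℕ) : 𝓞 K) = algebraMap ℤ (𝓞 K) (q.den : ℤ) := by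
        simp [algebraMap_int_eq]
      rw [this, Algebra.norm_algebraMap_of_basis (Module.Free.chooseBasis ℤ (𝓞 K))]
    have hnδ : Algebra.norm ℤ δ ≠ 0 := Algebra.norm_ne_zero_iff.mpr hδ0
    have hd1 : 1 ≤ d := by
      have := Module.finrank_pos (R := ℤ) (M := 𝓞 K)
      rwa [Module.finrank_eq_card_chooseBasisIndex] at this
    have hnat : (Algebra.norm ℤ α).natAbs = q.den ^ d * (Algebra.norm ℤ δ).natAbs := by
      rw [hnorm, Int.natAbs_mul, Int.natAbs_pow]
      simp
    have hnδpos : 0 < (Algebra.norm ℤ δ).natAbs := Int.natAbs_pos.mpr hnδ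
    have hden1 : q.den = 1 := by
      have hle2 : q.den ^ d * (Algebra.norm ℤ δ).natAbs ≤ 1 * (Algebra.norm ℤ δ).natAbs := by
        rw [one_mul, ← hnat]; exact hle'
      have hpow : q.den ^ d ≤ 1 := Nat.le_of_mul_le_mul_right hle2 hnδpos
      have hself : q.den ≤ q.den ^ d := Nat.le_self_pow (by omega) _
      exact le_antisymm (hself.trans hpow) q.pos
    refine ⟨q.num, Rat.num_ne_zero.mpr hq0, ?_⟩
    have hb1 : ((q.den : ℕ) : 𝓞 K) = 1 := by rw [hden1]; norm_num
    have : (q.num : 𝓞 K) * α = γ := by rw [h1, hb1, one_mul]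
    rw [← this, zsmul_eq_mul]
  · rintro ⟨n, hn, rfl⟩
    have hnK : (n : K) ≠ 0 := Int.cast_ne_zero.mpr hn
    have hcoe : ((n • α : 𝓞 K) : K) = (n : K) * (α : K) := by
      rw [show ((n • α : 𝓞 K) : K) = algebraMap (𝓞 K) K (n • α) from rfl, map_zsmul,
        zsmul_eq_mul]
    rw [hcoe, map_mul, map_intCast, mul_div_mul_left _ _ hnK, hαβ]
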